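/- Let I : A ↪ B be a Dwyer map, let F : A ⥤ C be any functor, and suppose the square with top F, left I, right J : C ⥤ D, bottom G : B ⥤ D is a pushout square in Cat. Then the functor J : C ⥤ D is fully faithful: for all objects c, c' of C, the map C(c,c') → D(Jc, Jc') induced by J is a bijection. -/

import Mathlib

open CategoryTheory

/-- The minimal cosieve of `B` generated by the image of `I : A ⥤ B`:
the set of objects of `B` that are the codomain of some arrow whose domain lies
in the image of `I`. -/
def minCosieve {A B : Type*} [Category A] [Category B] (I : A ⥤ B) : Set B :=
  {w : B | ∃ a : A, Nonempty (I.obj a ⟶ w)}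

/-- The corestriction of `I : A ⥤ B` to the minimal cosieve generated by its image. -/
def inclW {A B : Type*} [Category A] [Category B] (I : A ⥤ B) :
    A ⥤ ObjectProperty.FullSubcategory (fun b => b ∈ minCosieve I) where
  obj a := ⟨I.obj a, a, ⟨𝟙 _⟩⟩
  map f := InducedCategory.homMk (I.map f)
  map_id a := by ext; exact I.map_id a
  map_comp f g := by ext; exact I.map_comp f g

/-- A functor `I : A ⥤ B` is a Dwyer map if it is a full subcategory inclusion
(fully faithful and injective on objects), it is a sieve inclusion (classified by a
functor `χ : B ⥤ 𝟚` with `χ⁻¹(0)` equal to the image of `I`, where `𝟚 = Fin 2` is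
the two-object poset category `{0 < 1}`), and the corestriction of `I` to the
minimal cosieve `W` containing the image of `I` admits a right adjoint `R` whose
unit is the identity (a right adjoint left inverse). -/
structure IsDwyerMap {A B : Type*} [Category A] [Category B] (I : A ⥤ B) : Prop where
  full : I.Full
  faithful : I.Faithful
  injOnObj : Function.Injective I.obj
  sieve : ∃ χ : B ⥤ Fin 2, ∀ b : B, χ.obj b = 0 ↔ b ∈ Set.range I.obj
  rali : ∃ (R : ObjectProperty.FullSubcategory (fun b => b ∈ minCosieve I) ⥤ A)
    (h : inclW I ⋙ R = 𝟭 A) (adj : inclW I ⊣ R), adj.unit = eqToHom h.symm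

universe u

namespace DwyerPush

set_option linter.unusedSectionVars false

variable {A B C : Type u} [SmallCategory A] [SmallCategory B] [SmallCategory C]

abbrev Wc (I : A ⥤ B) := ObjectProperty.FullSubcategory (fun b => b ∈ minCosieve I)

lemma mem_of_hom {I : A ⥤ B} {b b' : B} (h : b ∈ minCosieve I) (g : b ⟶ b') :
    b' ∈ minCosieve I := by
  obtain ⟨a, ⟨u⟩⟩ := h; exact ⟨a, ⟨u ≫ g⟩⟩

/-- Objects of the explicit pushout model. `F` and `R` are phantom parameters. -/
def DPre (I : A ⥤ B) (_F : A ⥤ C) (_R : Wc I ⥤ A) : Type u :=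
  C ⊕ {b : B // b ∉ Set.range I.obj}

variable (I : A ⥤ B) (F : A ⥤ C) (R : Wc I ⥤ A)

def DHom : DPre I F R → DPre I F R → Type u
  | .inl c, .inl c' => c ⟶ c'
  | .inl c, .inr b => PSigma fun h : b.1 ∈ minCosieve I => (c ⟶ F.obj (R.obj ⟨b.1, h⟩))
  | .inr _, .inl _ => PEmpty
  | .inr b, .inr b' => b.1 ⟶ b'.1

instance : Category (DPre I F R) where
  Hom := DHom I F R
  id X := match X with
    | .inl c => (𝟙 c : c ⟶ c)
    | .inr b => (𝟙 b.1 : b.1 ⟶ b.1)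
  comp {X Y Z} f g := match X, Y, Z, f, g with
    | .inl _, .inl _, .inl _, f, g => f ≫ g
    | .inl _, .inl _, .inr _, f, ⟨h, g⟩ => ⟨h, f ≫ g⟩
    | .inl _, .inr b, .inr b', ⟨h, f⟩, g =>
        ⟨mem_of_hom h g, f ≫ F.map (R.map (ObjectProperty.homMk g : (⟨b.1, h⟩ : Wc I) ⟶ ⟨b'.1, mem_of_hom h g⟩))⟩
    | .inl _, .inr _, .inl _, _, g => g.elim
    | .inr _, .inl _, _, f, _ => f.elim
    | .inr _, .inr _, .inl _, _, g => g.elim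
    | .inr _, .inr _, .inr _, f, g => (f ≫ g : _ ⟶ _)
  id_comp {X Y} f := by
    match X, Y, f with
    | .inl _, .inl _, f => exact Category.id_comp f
    | .inl _, .inr _, ⟨h, f⟩ => exact congrArg (PSigma.mk h) (Category.id_comp f)
    | .inr _, .inl _, f => exact f.elim
    | .inr _, .inr _, f => exact Category.id_comp f
  comp_id {X Y} f := by
    match X, Y, f with
    | .inl _, .inl _, f => exact Category.comp_id f
    | .inl c, .inr b, ⟨h, f⟩ =>
        exact congrArg (PSigma.mk h) (by
          show f ≫ F.map (R.map (𝟙 (⟨b.1, h⟩ : Wc I))) = f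
          rw [R.map_id, F.map_id, Category.comp_id])
    | .inr _, .inl _, f => exact f.elim
    | .inr _, .inr _, f => exact Category.comp_id f
  assoc {X Y Z W} f g h := by
    match X, Y, Z, W, f, g, h with
    | .inl _, .inl _, .inl _, .inl _, f, g, h => exact Category.assoc f g h
    | .inl _, .inl _, .inl _, .inr _, f, g, ⟨hh, h⟩ =>
        exact congrArg (PSigma.mk hh) (Category.assoc f g h)
    | .inl _, .inl _, .inr _, .inr _, f, ⟨hh, g⟩, h =>
        exact congrArg (PSigma.mk _) (Category.assoc f g _)
    | .inl _, .inr b, .inr b', .inr b'', ⟨hh, f⟩, g, h =>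
        exact congrArg (PSigma.mk _) (by
          show (f ≫ _) ≫ _ = f ≫ F.map (R.map (ObjectProperty.homMk (Y := ⟨b''.1, mem_of_hom hh (g ≫ h : b.1 ⟶ b''.1)⟩) (g ≫ h : b.1 ⟶ b''.1) : (⟨b.1, hh⟩ : Wc I) ⟶ _))
          rw [Category.assoc, ← F.map_comp, ← R.map_comp]
          rfl)
    | .inl _, .inl _, .inr _, .inl _, _, _, h => exact h.elim
    | .inl _, .inr _, .inl _, .inl _, _, g, _ => exact g.elim
    | .inl _, .inr _, .inl _, .inr _, _, g, _ => exact g.elim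
    | .inl _, .inr _, .inr _, .inl _, _, _, h => exact h.elim
    | .inr _, .inl _, .inl _, .inl _, f, _, _ => exact f.elim
    | .inr _, .inl _, .inl _, .inr _, f, _, _ => exact f.elim
    | .inr _, .inl _, .inr _, .inl _, f, _, _ => exact f.elim
    | .inr _, .inl _, .inr _, .inr _, f, _, _ => exact f.elim
    | .inr _, .inr _, .inl _, .inl _, _, g, _ => exact g.elim
    | .inr _, .inr _, .inl _, .inr _, _, g, _ => exact g.elim
    | .inr _, .inr _, .inr _, .inl _, _, _, h => exact h.elim
    | .inr _, .inr _, .inr _, .inr _, f, g, h => exact Category.assoc f g h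

variable {I F R}

/-- The left pushout inclusion into the model. -/
def Jhat : C ⥤ DPre I F R where
  obj c := Sum.inl c
  map f := f
  map_id _ := rfl
  map_comp _ _ := rfl

/-- `inr` objects. -/
def nr (b : {b : B // b ∉ Set.range I.obj}) : DPre I F R := Sum.inr b

/-- homs into an `inr` object. -/
def toInr (c : C) (b : {b : B // b ∉ Set.range I.obj}) (h : b.1 ∈ minCosieve I)
    (φ : c ⟶ F.obj (R.obj ⟨b.1, h⟩)) : (Jhat.obj c : DPre I F R) ⟶ nr b := ⟨h, φ⟩

/-- homs between `inr` objects. -/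
def inrHom {b b' : {b : B // b ∉ Set.range I.obj}} (g : b.1 ⟶ b'.1) :
    (nr b : DPre I F R) ⟶ nr b' := g

lemma toInr_ext {c : C} {b : {b : B // b ∉ Set.range I.obj}} (h h' : b.1 ∈ minCosieve I)
    (φ : c ⟶ F.obj (R.obj ⟨b.1, h⟩)) (φ' : c ⟶ F.obj (R.obj ⟨b.1, h'⟩)) (hφ : φ = φ') :
    toInr (F := F) (R := R) c b h φ = toInr c b h' φ' := by
  cases Subsingleton.elim h h'
  exact congrArg (PSigma.mk h) hφ

@[simp] lemma Jhat_comp_toInr {c c' : C} (f : c ⟶ c') (b : {b : B // b ∉ Set.range I.obj})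
    (h : b.1 ∈ minCosieve I) (φ : c' ⟶ F.obj (R.obj ⟨b.1, h⟩)) :
    (Jhat.map f : (Jhat.obj c : DPre I F R) ⟶ _) ≫ toInr c' b h φ = toInr c b h (f ≫ φ) := rfl

@[simp] lemma toInr_comp_inrHom {c : C} (b b' : {b : B // b ∉ Set.range I.obj})
    (h : b.1 ∈ minCosieve I) (φ : c ⟶ F.obj (R.obj ⟨b.1, h⟩)) (g : b.1 ⟶ b'.1) :
    toInr (F := F) (R := R) c b h φ ≫ inrHom g =
      toInr c b' (mem_of_hom h g)
        (φ ≫ F.map (R.map (ObjectProperty.homMk g : (⟨b.1, h⟩ : Wc I) ⟶ ⟨b'.1, mem_of_hom h g⟩))) := rfl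

@[simp] lemma inrHom_comp {b b' b'' : {b : B // b ∉ Set.range I.obj}}
    (g : b.1 ⟶ b'.1) (g' : b'.1 ⟶ b''.1) :
    inrHom (F := F) (R := R) g ≫ inrHom g' = inrHom (g ≫ g') := rfl

@[simp] lemma inrHom_id (b : {b : B // b ∉ Set.range I.obj}) :
    inrHom (F := F) (R := R) (𝟙 b.1) = 𝟙 (nr b) := rfl

@[simp] lemma Jhat_comp_toInr_assoc {c c' : C} (f : c ⟶ c') (b : {b : B // b ∉ Set.range I.obj})
    (h : b.1 ∈ minCosieve I) (φ : c' ⟶ F.obj (R.obj ⟨b.1, h⟩)) {X : DPre I F R} (x : nr b ⟶ X) :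
    (Jhat.map f : (Jhat.obj c : DPre I F R) ⟶ _) ≫ toInr c' b h φ ≫ x =
      toInr c b h (f ≫ φ) ≫ x := by
  rw [← Category.assoc, Jhat_comp_toInr]

@[simp] lemma toInr_comp_inrHom_assoc {c : C} (b b' : {b : B // b ∉ Set.range I.obj})
    (h : b.1 ∈ minCosieve I) (φ : c ⟶ F.obj (R.obj ⟨b.1, h⟩)) (g : b.1 ⟶ b'.1)
    {X : DPre I F R} (x : nr b' ⟶ X) :
    toInr (F := F) (R := R) c b h φ ≫ inrHom g ≫ x =
      toInr c b' (mem_of_hom h g)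
        (φ ≫ F.map (R.map (ObjectProperty.homMk g : (⟨b.1, h⟩ : Wc I) ⟶ ⟨b'.1, mem_of_hom h g⟩))) ≫ x := by
  rw [← Category.assoc, toInr_comp_inrHom]

@[simp] lemma inrHom_comp_assoc {b b' b'' : {b : B // b ∉ Set.range I.obj}}
    (g : b.1 ⟶ b'.1) (g' : b'.1 ⟶ b''.1) {X : DPre I F R} (x : nr b'' ⟶ X) :
    inrHom (F := F) (R := R) g ≫ inrHom g' ≫ x = inrHom (g ≫ g') ≫ x := by
  rw [← Category.assoc, inrHom_comp]

section Ghat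

variable (I F R)
variable (adj : inclW I ⊣ R) (χ : B ⥤ Fin 2)
  (hχ : ∀ b : B, χ.obj b = 0 ↔ b ∈ Set.range I.obj)
  (hinj : Function.Injective I.obj) [I.Full] [I.Faithful]

noncomputable def pre {b : B} (hb : b ∈ Set.range I.obj) : A := hb.choose

lemma I_pre {b : B} (hb : b ∈ Set.range I.obj) : I.obj (pre I hb) = b := hb.choose_spec

include hinj in
lemma pre_eq {a : A} (hb : I.obj a ∈ Set.range I.obj) : pre I hb = a :=
  hinj (I_pre I hb)

include χ hχ in
lemma not_range_of_hom {b b' : B} (hb : b ∉ Set.range I.obj) (g : b ⟶ b') :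
    b' ∉ Set.range I.obj := by
  intro hb'
  have h1 : χ.obj b' = 0 := (hχ b').2 hb'
  have h2 : χ.obj b ≤ χ.obj b' := leOfHom (χ.map g)
  exact hb ((hχ b).1 (le_antisymm (h1 ▸ h2) (Fin.zero_le _)))

lemma mem_cosieve_of_range {b b' : B} (hb : b ∈ Set.range I.obj) (g : b ⟶ b') :
    b' ∈ minCosieve I := ⟨pre I hb, ⟨eqToHom (I_pre I hb) ≫ g⟩⟩

open Classical in
noncomputable def ghatObj (b : B) : DPre I F R :=
  if hb : b ∈ Set.range I.obj then Jhat.obj (F.obj (pre I hb)) else nr ⟨b, hb⟩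

lemma ghatObj_inl {b : B} (hb : b ∈ Set.range I.obj) :
    ghatObj I F R b = Jhat.obj (F.obj (pre I hb)) := dif_pos hb

lemma ghatObj_inr {b : B} (hb : b ∉ Set.range I.obj) :
    ghatObj I F R b = nr ⟨b, hb⟩ := dif_neg hb

/-- the adjoint transpose of a morphism out of an object in the image. -/
noncomputable def wlift {b b' : B} (hb : b ∈ Set.range I.obj) (g : b ⟶ b')
    (h' : b' ∈ minCosieve I) : pre I hb ⟶ R.obj ⟨b', h'⟩ :=
  (adj.homEquiv _ _)
    (show (inclW I).obj (pre I hb) ⟶ (⟨b', h'⟩ : Wc I) from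
      ObjectProperty.homMk (eqToHom (I_pre I hb) ≫ g : I.obj (pre I hb) ⟶ b'))

open Classical in
noncomputable def ghatMap {b b' : B} (g : b ⟶ b') : ghatObj I F R b ⟶ ghatObj I F R b' :=
  if hb : b ∈ Set.range I.obj then
    if hb' : b' ∈ Set.range I.obj then
      eqToHom (ghatObj_inl I F R hb) ≫
        Jhat.map (F.map (I.preimage (eqToHom (I_pre I hb) ≫ g ≫ eqToHom (I_pre I hb').symm))) ≫
        eqToHom (ghatObj_inl I F R hb').symm
    else
      eqToHom (ghatObj_inl I F R hb) ≫
        toInr _ ⟨b', hb'⟩ (mem_cosieve_of_range I hb g)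
          (F.map (wlift I R adj hb g (mem_cosieve_of_range I hb g))) ≫
        eqToHom (ghatObj_inr I F R hb').symm
  else
    eqToHom (ghatObj_inr I F R hb) ≫
      inrHom (b := ⟨b, hb⟩) (b' := ⟨b', not_range_of_hom I χ hχ hb g⟩) g ≫
      eqToHom (ghatObj_inr I F R (not_range_of_hom I χ hχ hb g)).symm

end Ghat

section Ghat2
variable (I F R)
variable (adj : inclW I ⊣ R) (χ : B ⥤ Fin 2)
  (hχ : ∀ b : B, χ.obj b = 0 ↔ b ∈ Set.range I.obj)
  (hinj : Function.Injective I.obj) [I.Full] [I.Faithful]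

noncomputable def Ghat : B ⥤ DPre I F R where
  obj := ghatObj I F R
  map := ghatMap I F R adj χ hχ
  map_id b := by
    by_cases hb : b ∈ Set.range I.obj
    · simp only [ghatMap, dif_pos hb]
      have : I.preimage (eqToHom (I_pre I hb) ≫ 𝟙 b ≫ eqToHom (I_pre I hb).symm) = 𝟙 _ := by
        apply I.map_injective
        simp
      rw [this]
      simp
    · simp only [ghatMap, dif_neg hb]
      show eqToHom (ghatObj_inr I F R hb) ≫ 𝟙 (nr (I := I) (F := F) (R := R) ⟨b, hb⟩) ≫
        eqToHom (ghatObj_inr I F R hb).symm = 𝟙 (ghatObj I F R b)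
      simp
  map_comp {b b' b''} g g' := by
    by_cases hb : b ∈ Set.range I.obj
    · by_cases hb' : b' ∈ Set.range I.obj
      · by_cases hb'' : b'' ∈ Set.range I.obj
        · -- TTT
          simp only [ghatMap, dif_pos hb, dif_pos hb', dif_pos hb'']
          have : I.preimage (eqToHom (I_pre I hb) ≫ (g ≫ g') ≫ eqToHom (I_pre I hb'').symm) =
              I.preimage (eqToHom (I_pre I hb) ≫ g ≫ eqToHom (I_pre I hb').symm) ≫
              I.preimage (eqToHom (I_pre I hb') ≫ g' ≫ eqToHom (I_pre I hb'').symm) := by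
            apply I.map_injective
            simp
          rw [this]
          simp
        · -- TTF
          simp only [ghatMap, dif_pos hb, dif_pos hb', dif_neg hb'']
          have : wlift I R adj hb (g ≫ g') (mem_cosieve_of_range I hb (g ≫ g')) =
              I.preimage (eqToHom (I_pre I hb) ≫ g ≫ eqToHom (I_pre I hb').symm) ≫
                wlift I R adj hb' g' (mem_cosieve_of_range I hb' g') := by
            unfold wlift
            rw [← Adjunction.homEquiv_naturality_left]
            congr 1
            ext
            show (eqToHom (I_pre I hb) ≫ g ≫ g' : I.obj (pre I hb) ⟶ b'') =
              I.map (I.preimage (eqToHom (I_pre I hb) ≫ g ≫ eqToHom (I_pre I hb').symm)) ≫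
                (eqToHom (I_pre I hb') ≫ g' : I.obj (pre I hb') ⟶ b'')
            simp
          rw [this]
          simp only [F.map_comp]
          simp only [Category.assoc, eqToHom_trans, eqToHom_refl, Category.id_comp,
            eqToHom_trans_assoc]
          simp only [Category.assoc, eqToHom_trans, eqToHom_refl, Category.id_comp,
          eqToHom_trans_assoc, Jhat_comp_toInr, Jhat_comp_toInr_assoc, toInr_comp_inrHom,
          toInr_comp_inrHom_assoc, inrHom_comp, inrHom_comp_assoc]
        try rfl
      · -- TFF
        have hb'' : b'' ∉ Set.range I.obj := not_range_of_hom I χ hχ hb' g'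
        simp only [ghatMap, dif_pos hb, dif_neg hb', dif_neg hb'']
        have : wlift I R adj hb (g ≫ g') (mem_cosieve_of_range I hb (g ≫ g')) =
            wlift I R adj hb g (mem_cosieve_of_range I hb g) ≫
              R.map (ObjectProperty.homMk (g' : b' ⟶ b'') :
                (⟨b', mem_cosieve_of_range I hb g⟩ : Wc I) ⟶ ⟨b'', mem_cosieve_of_range I hb (g ≫ g')⟩) := by
          unfold wlift
          rw [← Adjunction.homEquiv_naturality_right]
          congr 1
          ext
          show (eqToHom (I_pre I hb) ≫ g ≫ g' : I.obj (pre I hb) ⟶ b'') =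
            ((eqToHom (I_pre I hb) ≫ g : I.obj (pre I hb) ⟶ b') ≫ g' : I.obj (pre I hb) ⟶ b'')
          simp
        rw [this]
        simp only [F.map_comp]
        simp only [Category.assoc, eqToHom_trans, eqToHom_refl, Category.id_comp,
          eqToHom_trans_assoc, Jhat_comp_toInr, Jhat_comp_toInr_assoc, toInr_comp_inrHom,
          toInr_comp_inrHom_assoc, inrHom_comp, inrHom_comp_assoc]
        try rfl
    · -- FFF
      have hb' : b' ∉ Set.range I.obj := not_range_of_hom I χ hχ hb g
      have hb'' : b'' ∉ Set.range I.obj := not_range_of_hom I χ hχ hb' g'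
      simp only [ghatMap, dif_neg hb, dif_neg hb', dif_neg hb'']
      simp only [Category.assoc, eqToHom_trans, eqToHom_refl, Category.id_comp,
        eqToHom_trans_assoc, Jhat_comp_toInr, Jhat_comp_toInr_assoc, toInr_comp_inrHom,
        toInr_comp_inrHom_assoc, inrHom_comp, inrHom_comp_assoc]
      try rfl

end Ghat2

section K
variable (I F R)
variable (adj : inclW I ⊣ R) (χ : B ⥤ Fin 2)
  (hχ : ∀ b : B, χ.obj b = 0 ↔ b ∈ Set.range I.obj)
  (hinj : Function.Injective I.obj) [I.Full] [I.Faithful]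

include hinj in
lemma comm : F ⋙ Jhat = I ⋙ Ghat I F R adj χ hχ := by
  have hobj : ∀ a, (F ⋙ Jhat).obj a = (I ⋙ Ghat I F R adj χ hχ).obj a := by
    intro a
    have hb : I.obj a ∈ Set.range I.obj := ⟨a, rfl⟩
    show Jhat.obj (F.obj a) = ghatObj I F R (I.obj a)
    rw [ghatObj_inl I F R hb, pre_eq I hinj hb]
  refine CategoryTheory.Functor.ext hobj (fun X Y f => ?_)
  · have hb : I.obj X ∈ Set.range I.obj := ⟨X, rfl⟩
    have hb' : I.obj Y ∈ Set.range I.obj := ⟨Y, rfl⟩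
    have ha : pre I hb = X := pre_eq I hinj hb
    have ha' : pre I hb' = Y := pre_eq I hinj hb'
    show Jhat.map (F.map f) = _ ≫ ghatMap I F R adj χ hχ (I.map f) ≫ _
    refine (conj_eqToHom_iff_heq' _ _ _ _).2 ?_
    simp only [ghatMap, dif_pos hb, dif_pos hb']
    have : I.preimage (eqToHom (I_pre I hb) ≫ I.map f ≫ eqToHom (I_pre I hb').symm)
        = eqToHom ha ≫ f ≫ eqToHom ha'.symm := by
      apply I.map_injective
      simp [eqToHom_map]
    rw [this]
    simp [eqToHom_map]

variable {D : Type u} [SmallCategory D] (J : C ⥤ D) (G : B ⥤ D) (hsq : F ⋙ J = I ⋙ G)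

def Kf : DPre I F R ⥤ D where
  obj X := match X with
    | .inl c => J.obj c
    | .inr b => G.obj b.1
  map {X Y} f := match X, Y, f with
    | .inl _, .inl _, f => J.map f
    | .inl _, .inr b, ⟨h, φ⟩ =>
        J.map φ ≫ eqToHom (Functor.congr_obj hsq (R.obj ⟨b.1, h⟩)) ≫
          G.map (show I.obj (R.obj ⟨b.1, h⟩) ⟶ b.1 from (adj.counit.app ⟨b.1, h⟩).hom)
    | .inr _, .inl _, f => f.elim
    | .inr _, .inr _, g => G.map g
  map_id X := by
    match X with
    | .inl c => exact J.map_id c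
    | .inr b => exact G.map_id b.1
  map_comp {X Y Z} f g := by
    match X, Y, Z, f, g with
    | .inl _, .inl _, .inl _, f, g => exact J.map_comp f g
    | .inl _, .inl _, .inr b, f, ⟨h, φ⟩ =>
        show J.map (f ≫ φ) ≫ _ = J.map f ≫ J.map φ ≫ _
        erw [J.map_comp, Category.assoc]
    | .inl _, .inr b, .inr b', ⟨h, φ⟩, g =>
        show J.map (φ ≫ F.map (R.map (ObjectProperty.homMk (g : b.1 ⟶ b'.1) :
              (⟨b.1, h⟩ : Wc I) ⟶ ⟨b'.1, mem_of_hom h g⟩))) ≫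
            eqToHom (Functor.congr_obj hsq (R.obj ⟨b'.1, mem_of_hom h g⟩)) ≫
            G.map (show I.obj (R.obj ⟨b'.1, mem_of_hom h g⟩) ⟶ b'.1 from
              (adj.counit.app ⟨b'.1, mem_of_hom h g⟩).hom) =
          (J.map φ ≫ eqToHom (Functor.congr_obj hsq (R.obj ⟨b.1, h⟩)) ≫
            G.map (show I.obj (R.obj ⟨b.1, h⟩) ⟶ b.1 from (adj.counit.app ⟨b.1, h⟩).hom)) ≫ G.map g
        · have hc := Functor.congr_hom hsq
            (R.map (show (⟨b.1, h⟩ : Wc I) ⟶ ⟨b'.1, mem_of_hom h g⟩ from ObjectProperty.homMk g))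
          simp only [Functor.comp_map] at hc
          rw [J.map_comp, Category.assoc, hc]
          simp only [Category.assoc, eqToHom_trans_assoc, eqToHom_refl, Category.id_comp]
          erw [← G.map_comp]
          have hnat : (I.map (R.map (ObjectProperty.homMk (g : b.1 ⟶ b'.1) :
                (⟨b.1, h⟩ : Wc I) ⟶ ⟨b'.1, mem_of_hom h g⟩)) ≫
              (show I.obj (R.obj ⟨b'.1, mem_of_hom h g⟩) ⟶ b'.1 from
                (adj.counit.app ⟨b'.1, mem_of_hom h g⟩).hom) :
                I.obj (R.obj ⟨b.1, h⟩) ⟶ b'.1) =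
              (show I.obj (R.obj ⟨b.1, h⟩) ⟶ b.1 from (adj.counit.app ⟨b.1, h⟩).hom) ≫ g :=
            congrArg (fun t => t.hom)
              (adj.counit.naturality (show (⟨b.1, h⟩ : Wc I) ⟶ ⟨b'.1, mem_of_hom h g⟩ from
                ObjectProperty.homMk g))
          erw [hnat, G.map_comp]
    | .inl _, .inr _, .inl _, _, g => exact g.elim
    | .inr _, .inl _, _, f, _ => exact f.elim
    | .inr _, .inr _, .inl _, _, g => exact g.elim
    | .inr _, .inr _, .inr _, f, g => exact G.map_comp f g

lemma KJ : Jhat ⋙ Kf I F R adj J G hsq = J := rfl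

@[simp] lemma Kf_map_Jhat {c c' : C} (f : c ⟶ c') :
    (Kf I F R adj J G hsq).map (Jhat.map f : (Jhat.obj c : DPre I F R) ⟶ _) = J.map f := rfl

@[simp] lemma Kf_map_toInr {c : C} (b : {b : B // b ∉ Set.range I.obj})
    (h : b.1 ∈ minCosieve I) (φ : c ⟶ F.obj (R.obj ⟨b.1, h⟩)) :
    (Kf I F R adj J G hsq).map (toInr c b h φ) =
      J.map φ ≫ eqToHom (Functor.congr_obj hsq (R.obj ⟨b.1, h⟩)) ≫
        G.map (show I.obj (R.obj ⟨b.1, h⟩) ⟶ b.1 from (adj.counit.app ⟨b.1, h⟩).hom) := rfl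

@[simp] lemma Kf_map_inrHom {b b' : {b : B // b ∉ Set.range I.obj}} (g : b.1 ⟶ b'.1) :
    (Kf I F R adj J G hsq).map (inrHom g) = G.map g := rfl

include hinj in
lemma KG : Ghat I F R adj χ hχ ⋙ Kf I F R adj J G hsq = G := by
  have hobj : ∀ b, (Ghat I F R adj χ hχ ⋙ Kf I F R adj J G hsq).obj b = G.obj b := by
    intro b
    show (Kf I F R adj J G hsq).obj (ghatObj I F R b) = G.obj b
    by_cases hb : b ∈ Set.range I.obj
    · rw [ghatObj_inl I F R hb]
      show (F ⋙ J).obj (pre I hb) = G.obj b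
      rw [Functor.congr_obj hsq (pre I hb)]
      show G.obj (I.obj (pre I hb)) = G.obj b
      rw [I_pre I hb]
    · rw [ghatObj_inr I F R hb]
      rfl
  refine CategoryTheory.Functor.ext hobj (fun b b' g => ?_)
  · show (Kf I F R adj J G hsq).map (ghatMap I F R adj χ hχ g) = _
    refine (conj_eqToHom_iff_heq' _ _ _ _).2 ?_
    by_cases hb : b ∈ Set.range I.obj
    · by_cases hb' : b' ∈ Set.range I.obj
      · simp only [ghatMap, dif_pos hb, dif_pos hb', Functor.map_comp, eqToHom_map,
          Kf_map_Jhat]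
        have hc := Functor.congr_hom hsq
          (I.preimage (eqToHom (I_pre I hb) ≫ g ≫ eqToHom (I_pre I hb').symm))
        simp only [Functor.comp_map] at hc
        rw [hc, Functor.map_preimage]
        simp [eqToHom_map]
        refine (comp_eqToHom_heq_iff _ _ _).2 ?_
        refine (eqToHom_comp_heq_iff _ _ _).2 ?_
        exact comp_eqToHom_heq _ _
      · simp only [ghatMap, dif_pos hb, dif_neg hb', Functor.map_comp, eqToHom_map,
          Kf_map_toInr]
        have hc := Functor.congr_hom hsq (wlift I R adj hb g (mem_cosieve_of_range I hb g))
        simp only [Functor.comp_map] at hc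
        rw [hc]
        simp only [Category.assoc, eqToHom_trans_assoc, eqToHom_refl, Category.id_comp]
        have hkey : (I.map (wlift I R adj hb g (mem_cosieve_of_range I hb g)) ≫
            ((adj.counit.app ⟨b', mem_cosieve_of_range I hb g⟩).hom :
              I.obj (R.obj ⟨b', mem_cosieve_of_range I hb g⟩) ⟶ b') :
              I.obj (pre I hb) ⟶ b') = eqToHom (I_pre I hb) ≫ g := by
          have h2 := (adj.homEquiv (pre I hb)
            (⟨b', mem_cosieve_of_range I hb g⟩ : Wc I)).symm_apply_apply
            (show (inclW I).obj (pre I hb) ⟶ (⟨b', mem_cosieve_of_range I hb g⟩ : Wc I) from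
              ObjectProperty.homMk (eqToHom (I_pre I hb) ≫ g : I.obj (pre I hb) ⟶ b'))
          rw [adj.homEquiv_counit] at h2
          exact congrArg (fun t => t.hom) h2
        refine (eqToHom_comp_heq_iff _ _ _).2 ?_
        refine (comp_eqToHom_heq_iff _ _ _).2 ?_
        refine (eqToHom_comp_heq_iff _ _ _).2 ?_
        refine HEq.trans (heq_of_eq (G.map_comp _ _).symm) ?_
        refine HEq.trans (heq_of_eq (congrArg G.map hkey)) ?_
        simp [eqToHom_map]
    · have hb' : b' ∉ Set.range I.obj := not_range_of_hom I χ hχ hb g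
      simp only [ghatMap, dif_neg hb, dif_neg hb', Functor.map_comp, eqToHom_map,
        Kf_map_inrHom]
      try simp [eqToHom_map]
      exact comp_eqToHom_heq _ _

end K

end DwyerPush

/-- If `I : A ↪ B` is a Dwyer map and the square with top `F`, left `I`, right `J`,
bottom `G` is a pushout in `Cat`, then `J : C ⥤ D` is fully faithful: for all
objects `c, c'` of `C`, the induced map `C(c,c') → D(Jc,Jc')` is a bijection. -/
theorem pushout_inl_fullyFaithful
    {A B C D : Type u} [SmallCategory A] [SmallCategory B] [SmallCategory C] [SmallCategory D]
    (I : A ⥤ B) (F : A ⥤ C) (J : C ⥤ D) (G : B ⥤ D)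
    (hI : IsDwyerMap I)
    (sq : IsPushout (C := Cat.{u,u}) (Z := Cat.of A) (X := Cat.of C) (Y := Cat.of B)
      (P := Cat.of D) F.toCatHom I.toCatHom J.toCatHom G.toCatHom) :
    ∀ c c' : C, Function.Bijective (fun f : c ⟶ c' => J.map f) := by
  obtain ⟨R, hR, adj, hadj⟩ := hI.rali
  obtain ⟨χ, hχ⟩ := hI.sieve
  haveI := hI.full
  haveI := hI.faithful
  have hinj := hI.injOnObj
  have hcomm : F ⋙ DwyerPush.Jhat = I ⋙ DwyerPush.Ghat I F R adj χ hχ :=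
    DwyerPush.comm I F R adj χ hχ hinj
  let H : D ⥤ DwyerPush.DPre I F R :=
    (sq.desc (W := Cat.of (DwyerPush.DPre I F R)) DwyerPush.Jhat.toCatHom
      (DwyerPush.Ghat I F R adj χ hχ).toCatHom (congrArg Functor.toCatHom hcomm)).toFunctor
  have h1 : J ⋙ H = DwyerPush.Jhat := 
    congrArg Cat.Hom.toFunctor (sq.inl_desc _ _ (congrArg Functor.toCatHom hcomm))
  have h2 : G ⋙ H = DwyerPush.Ghat I F R adj χ hχ := 
    congrArg Cat.Hom.toFunctor (sq.inr_desc _ _ (congrArg Functor.toCatHom hcomm))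
  have hsq' : F ⋙ J = I ⋙ G := congrArg Cat.Hom.toFunctor sq.w
  let K := DwyerPush.Kf I F R adj J G hsq'
  have h3 : DwyerPush.Jhat ⋙ K = J := DwyerPush.KJ I F R adj J G hsq'
  have h4 : DwyerPush.Ghat I F R adj χ hχ ⋙ K = G :=
    DwyerPush.KG I F R adj χ hχ hinj J G hsq'
  have h5 : H ⋙ K = 𝟭 D := by
    refine congrArg Cat.Hom.toFunctor
      (sq.hom_ext (W := Cat.of D) (k := (H ⋙ K : D ⥤ D).toCatHom) (l := (𝟭 D).toCatHom) ?_ ?_)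
    · apply Cat.ext
      show J ⋙ H ⋙ K = J ⋙ 𝟭 D
      rw [← Functor.assoc, h1, h3, Functor.comp_id]
    · apply Cat.ext
      show G ⋙ H ⋙ K = G ⋙ 𝟭 D
      rw [← Functor.assoc, h2, h4, Functor.comp_id]
  intro c c'
  have hc : ∀ x : C, H.obj (J.obj x) = DwyerPush.Jhat.obj x := fun x =>
    Functor.congr_obj h1 x
  have hmap : ∀ f : c ⟶ c', H.map (J.map f) =
      eqToHom (hc c) ≫ DwyerPush.Jhat.map f ≫ eqToHom (hc c').symm := fun f => by
    have hf := Functor.congr_hom h1 f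
    simpa using hf
  constructor
  · -- injective
    intro f g hfg
    have h6 : H.map (J.map f) = H.map (J.map g) := congrArg H.map hfg
    rw [hmap f, hmap g] at h6
    have h7 := congrArg
      (fun t => eqToHom (hc c).symm ≫ t ≫ eqToHom (hc c')) h6
    simp only [Category.assoc, eqToHom_trans, eqToHom_refl, Category.id_comp,
      eqToHom_trans_assoc, Category.comp_id] at h7
    exact h7
  · -- surjective
    intro u
    refine ⟨show (DwyerPush.Jhat.obj c : DwyerPush.DPre I F R) ⟶ DwyerPush.Jhat.obj c' from
      eqToHom (hc c).symm ≫ H.map u ≫ eqToHom (hc c'), ?_⟩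
    show K.map (show (DwyerPush.Jhat.obj c : DwyerPush.DPre I F R) ⟶ DwyerPush.Jhat.obj c' from
      eqToHom (hc c).symm ≫ H.map u ≫ eqToHom (hc c')) = u
    have h6 := Functor.congr_hom h5 u
    simp only [Functor.comp_map, Functor.id_map] at h6
    rw [K.map_comp, K.map_comp, h6]
    try simp only [eqToHom_map, Category.assoc, eqToHom_trans, eqToHom_refl,
      Category.id_comp, eqToHom_trans_assoc, Category.comp_id]
    try simp [eqToHom_trans, eqToHom_refl, eqToHom_map]
    exact ((conj_eqToHom_iff_heq' u u _ _).2 HEq.rfl).symm
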